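/- Suppose a subgroup G of GL_n(ℂ) contains a non-diagonalizable matrix. Then there is a rational function h on GL_n(ℂ) × GL_n(ℂ) (a quotient of polynomial functions of the matrix entries) such that h(G × G) ∩ ℝ contains ℚ_{>0}; in particular h(G × G) is dense in ℝ_{>0}. -/

import Mathlib

open Matrix

/-- `M` is diagonalizable over `ℂ` if it is conjugate to a diagonal matrix. -/
def IsDiagonalizable {n : ℕ} (M : Matrix (Fin n) (Fin n) ℂ) : Prop :=
  ∃ P : GL (Fin n) ℂ, (((P : Matrix (Fin n) (Fin n) ℂ) * M * (↑P⁻¹ : Matrix (Fin n) (Fin n) ℂ))).IsDiag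

/-- Evaluation of a polynomial in the `2n²` entries of a pair of matrices. -/
noncomputable def evalAt {n : ℕ}
    (P : MvPolynomial ((Fin n × Fin n) ⊕ (Fin n × Fin n)) ℂ)
    (g g' : Matrix (Fin n) (Fin n) ℂ) : ℂ :=
  MvPolynomial.eval (fun v => Sum.elim (fun p => g p.1 p.2) (fun p => g' p.1 p.2) v) P

lemma aux_isDiagonalizable {n : ℕ} (A : Matrix (Fin n) (Fin n) ℂ)
    (H : ∀ (μ : ℂ) (v : Fin n → ℂ),
      A *ᵥ (A *ᵥ v - μ • v) = μ • (A *ᵥ v - μ • v) → A *ᵥ v - μ • v = 0) :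
    IsDiagonalizable A := by
  classical
  set f : Module.End ℂ (Fin n → ℂ) := Matrix.toLin' A with hf
  have key : ∀ (μ : ℂ) (u : Fin n → ℂ), (f - μ • 1) u = A *ᵥ u - μ • u := by
    intro μ u
    simp [hf, Matrix.toLin'_apply]
  have H' : ∀ (μ : ℂ) (v : Fin n → ℂ),
      (((f - μ • 1) ^ 2 : Module.End ℂ (Fin n → ℂ))) v = 0 → (f - μ • 1) v = 0 := by
    intro μ v h2
    rw [pow_two, Module.End.mul_apply, key, key] at h2
    rw [key]
    exact H μ v (sub_eq_zero.mp h2)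
  have hker : ∀ (μ : ℂ) (l : ℕ) (x : Fin n → ℂ),
      (((f - μ • 1) ^ (l + 1) : Module.End ℂ (Fin n → ℂ))) x = 0 →
      (f - μ • 1) x = 0 := by
    intro μ l
    induction l with
    | zero => intro x hx; simpa using hx
    | succ l ih =>
      intro x hx
      have h1 : (((f - μ • 1) ^ (l + 1) : Module.End ℂ (Fin n → ℂ))) ((f - μ • 1) x) = 0 := by
        rw [← Module.End.mul_apply, ← pow_succ]
        exact hx
      have h2 := ih _ h1
      exact H' μ x (by rw [pow_two, Module.End.mul_apply]; exact h2)
  have hspan : ⨆ μ : ℂ, Module.End.eigenspace f μ = ⊤ := by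
    rw [eq_top_iff, ← Module.End.iSup_maxGenEigenspace_eq_top f]
    refine iSup_mono fun μ => ?_
    intro x hx
    rw [Module.End.mem_maxGenEigenspace] at hx
    obtain ⟨k, hk⟩ := hx
    rw [Module.End.mem_eigenspace_iff]
    rcases k with _ | l
    · simp only [pow_zero, Module.End.one_apply] at hk
      simp [hk]
    · have h3 := hker μ l x hk
      have h4 : f x - μ • x = 0 := by simpa using h3
      exact sub_eq_zero.mp h4
  have hspan' : Submodule.span ℂ (⋃ μ : ℂ, (Module.End.eigenspace f μ : Set (Fin n → ℂ))) = ⊤ := by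
    rw [← Submodule.iSup_eq_span]; exact hspan
  obtain ⟨b, hbt, hbspan, hbli⟩ :=
    exists_linearIndependent ℂ (⋃ μ : ℂ, (Module.End.eigenspace f μ : Set (Fin n → ℂ)))
  rw [hspan'] at hbspan
  have hfin : b.Finite := hbli.setFinite
  have : Fintype b := hfin.fintype
  let b0 : Module.Basis b ℂ (Fin n → ℂ) :=
    Module.Basis.mk hbli (by rw [Subtype.range_coe]; exact hbspan.ge)
  have hcard : Fintype.card b = n := by
    have h1 := Module.finrank_eq_card_basis b0
    rw [Module.finrank_fin_fun] at h1
    exact h1.symm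
  let bb : Module.Basis (Fin n) ℂ (Fin n → ℂ) := b0.reindex (Fintype.equivFinOfCardEq hcard)
  have heig : ∀ j : Fin n, ∃ μ : ℂ, f (bb j) = μ • bb j := by
    intro j
    have hmem : (bb j : Fin n → ℂ) ∈ b := by
      show (b0.reindex (Fintype.equivFinOfCardEq hcard)) j ∈ b
      rw [Module.Basis.reindex_apply, Module.Basis.mk_apply]
      exact Subtype.mem _
    have h5 := hbt hmem
    simp only [Set.mem_iUnion, SetLike.mem_coe] at h5
    obtain ⟨μ, hμ⟩ := h5
    exact ⟨μ, Module.End.mem_eigenspace_iff.mp hμ⟩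
  let epi : Module.Basis (Fin n) ℂ (Fin n → ℂ) := Pi.basisFun ℂ (Fin n)
  have hA : LinearMap.toMatrix epi epi f = A := by
    show LinearMap.toMatrix (Pi.basisFun ℂ (Fin n)) (Pi.basisFun ℂ (Fin n)) f = A
    rw [LinearMap.toMatrix_eq_toMatrix']
    exact LinearMap.toMatrix'_toLin' A
  have hconj : bb.toMatrix ⇑epi * A * epi.toMatrix ⇑bb = LinearMap.toMatrix bb bb f := by
    rw [← hA]
    exact basis_toMatrix_mul_linearMap_toMatrix_mul_basis_toMatrix bb epi bb epi f
  have hdiag : (LinearMap.toMatrix bb bb f).IsDiag := by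
    intro i j hij
    obtain ⟨μ, hμ⟩ := heig j
    rw [LinearMap.toMatrix_apply, hμ, _root_.map_smul, Module.Basis.repr_self]
    simp [Finsupp.single_apply, Ne.symm hij]
  refine ⟨⟨bb.toMatrix ⇑epi, epi.toMatrix ⇑bb, Module.Basis.toMatrix_mul_toMatrix_flip _ _,
    Module.Basis.toMatrix_mul_toMatrix_flip _ _⟩, ?_⟩
  show (bb.toMatrix ⇑epi * A * epi.toMatrix ⇑bb).IsDiag
  rw [hconj]
  exact hdiag

/-- If a subgroup `G` of `GL_n(ℂ)` contains a non-diagonalizable matrix, then there is a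
rational function `h = P/Q` of the matrix entries such that `h(G × G)` contains every
positive rational; in particular `h(G × G)` is dense in `ℝ_{>0}`. -/
theorem rational_function_dense_image {n : ℕ} (G : Subgroup (GL (Fin n) ℂ))
    (hnd : ∃ a ∈ G, ¬ IsDiagonalizable (a : Matrix (Fin n) (Fin n) ℂ)) :
    ∃ P Q : MvPolynomial ((Fin n × Fin n) ⊕ (Fin n × Fin n)) ℂ,
      ∀ q : ℚ, 0 < q → ∃ g ∈ G, ∃ g' ∈ G,
        evalAt Q (g : Matrix (Fin n) (Fin n) ℂ) (g' : Matrix (Fin n) (Fin n) ℂ) ≠ 0 ∧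
        evalAt P (g : Matrix (Fin n) (Fin n) ℂ) (g' : Matrix (Fin n) (Fin n) ℂ) /
          evalAt Q (g : Matrix (Fin n) (Fin n) ℂ) (g' : Matrix (Fin n) (Fin n) ℂ) = (q : ℂ) := by
  obtain ⟨a, haG, hand⟩ := hnd
  set A : Matrix (Fin n) (Fin n) ℂ := (a : Matrix (Fin n) (Fin n) ℂ) with hAdef
  have hex : ∃ (μ : ℂ) (v : Fin n → ℂ), (A *ᵥ v - μ • v ≠ 0) ∧
      A *ᵥ (A *ᵥ v - μ • v) = μ • (A *ᵥ v - μ • v) := by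
    by_contra hcon
    push_neg at hcon
    exact hand (aux_isDiagonalizable A (fun μ v h => by
      by_contra hw
      exact hcon μ v hw h))
  obtain ⟨μ, v, hw0, hweig⟩ := hex
  set w : Fin n → ℂ := A *ᵥ v - μ • v with hwdef
  have hμ0 : μ ≠ 0 := by
    intro h
    apply hw0
    have h1 : A *ᵥ w = 0 := by rw [hweig, h, zero_smul]
    have h2 : (↑a⁻¹ : Matrix (Fin n) (Fin n) ℂ) * A = 1 := a.inv_mul
    calc w = ((↑a⁻¹ : Matrix (Fin n) (Fin n) ℂ) * A) *ᵥ w := by rw [h2, one_mulVec]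
      _ = (↑a⁻¹ : Matrix (Fin n) (Fin n) ℂ) *ᵥ (A *ᵥ w) := by rw [mulVec_mulVec]
      _ = 0 := by rw [h1, mulVec_zero]
  obtain ⟨i, hwi⟩ : ∃ i, w i ≠ 0 := by
    by_contra h; push_neg at h; exact hw0 (funext h)
  set v' : Fin n → ℂ := v - (v i / w i) • w with hv'def
  have hv'i : v' i = 0 := by
    simp only [hv'def, Pi.sub_apply, Pi.smul_apply, smul_eq_mul]
    field_simp
    simp
  have hAw : A *ᵥ w = μ • w := hweig
  have hAv : A *ᵥ v = μ • v + w := by rw [hwdef]; module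
  have hAv' : A *ᵥ v' = μ • v' + w := by
    have h1 : A *ᵥ v' = A *ᵥ v - (v i / w i) • (A *ᵥ w) := by
      rw [hv'def, mulVec_sub, mulVec_smul]
    rw [h1, hAv, hAw, hv'def]
    module
  have hpow_w : ∀ k : ℕ, (A ^ k) *ᵥ w = (μ ^ k) • w := by
    intro k; induction k with
    | zero => simp
    | succ k ih =>
      calc (A ^ (k + 1)) *ᵥ w = A ^ k *ᵥ (A *ᵥ w) := by rw [mulVec_mulVec, ← pow_succ]
        _ = A ^ k *ᵥ (μ • w) := by rw [hAw]
        _ = μ • ((A ^ k) *ᵥ w) := mulVec_smul _ _ _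
        _ = μ • ((μ ^ k) • w) := by rw [ih]
        _ = (μ ^ (k + 1)) • w := by rw [smul_smul, ← pow_succ']
  have hpow_v' : ∀ k : ℕ, (A ^ (k + 1)) *ᵥ v' = (μ ^ (k + 1)) • v' + (((k : ℂ) + 1) * μ ^ k) • w := by
    intro k; induction k with
    | zero => simpa using hAv'
    | succ k ih =>
      calc (A ^ (k + 2)) *ᵥ v' = A *ᵥ ((A ^ (k + 1)) *ᵥ v') := by
            rw [mulVec_mulVec, ← pow_succ']
        _ = A *ᵥ ((μ ^ (k + 1)) • v' + (((k : ℂ) + 1) * μ ^ k) • w) := by rw [ih]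
        _ = (μ ^ (k + 1)) • (A *ᵥ v') + (((k : ℂ) + 1) * μ ^ k) • (A *ᵥ w) := by
            rw [mulVec_add, mulVec_smul, mulVec_smul]
        _ = (μ ^ (k + 1)) • (μ • v' + w) + (((k : ℂ) + 1) * μ ^ k) • (μ • w) := by
            rw [hAv', hAw]
        _ = (μ ^ (k + 1 + 1)) • v' + ((((k : ℕ) + 1 : ℕ) + 1 : ℂ) * μ ^ (k + 1)) • w := by
            push_cast
            match_scalars <;> ring
  have hval_w : ∀ k : ℕ, ((A ^ k) *ᵥ w) i = μ ^ k * w i := by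
    intro k; rw [hpow_w k]; simp
  have hval_v' : ∀ k : ℕ, ((A ^ (k + 1)) *ᵥ v') i = ((k : ℂ) + 1) * μ ^ k * w i := by
    intro k; rw [hpow_v' k]
    simp [hv'i]
  classical
  refine ⟨(∑ j, MvPolynomial.X (Sum.inl (i, j)) * MvPolynomial.C (v' j)) *
          (∑ j, MvPolynomial.X (Sum.inr (i, j)) * MvPolynomial.C (w j)),
         (∑ j, MvPolynomial.X (Sum.inr (i, j)) * MvPolynomial.C (v' j)) *
          (∑ j, MvPolynomial.X (Sum.inl (i, j)) * MvPolynomial.C (w j)), ?_⟩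
  have hsum : ∀ (g : Matrix (Fin n) (Fin n) ℂ) (x : Fin n → ℂ),
      (∑ j, g i j * x j) = (g *ᵥ x) i := fun g x => rfl
  intro q hq
  obtain ⟨m, hm⟩ : ∃ m : ℕ, q.num.toNat = m + 1 := by
    have : 0 < q.num.toNat := by
      rw [Int.lt_toNat]
      exact_mod_cast Rat.num_pos.mpr hq
    exact ⟨q.num.toNat - 1, (Nat.succ_pred_eq_of_pos this).symm⟩
  obtain ⟨k, hk⟩ : ∃ k : ℕ, q.den = k + 1 :=
    ⟨q.den - 1, (Nat.succ_pred_eq_of_pos q.pos).symm⟩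
  refine ⟨a ^ (m + 1), pow_mem haG _, a ^ (k + 1), pow_mem haG _, ?_⟩
  have hcoe1 : ((a ^ (m + 1) : GL (Fin n) ℂ) : Matrix (Fin n) (Fin n) ℂ) = A ^ (m + 1) :=
    Units.val_pow_eq_pow_val a (m + 1)
  have hcoe2 : ((a ^ (k + 1) : GL (Fin n) ℂ) : Matrix (Fin n) (Fin n) ℂ) = A ^ (k + 1) :=
    Units.val_pow_eq_pow_val a (k + 1)
  have hevalP : evalAt ((∑ j, MvPolynomial.X (Sum.inl (i, j)) * MvPolynomial.C (v' j)) *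
          (∑ j, MvPolynomial.X (Sum.inr (i, j)) * MvPolynomial.C (w j)))
      ((a ^ (m + 1) : GL (Fin n) ℂ) : Matrix (Fin n) (Fin n) ℂ)
      ((a ^ (k + 1) : GL (Fin n) ℂ) : Matrix (Fin n) (Fin n) ℂ)
      = (((m : ℂ) + 1) * μ ^ m * w i) * (μ ^ (k + 1) * w i) := by
    simp only [evalAt, _root_.map_mul, _root_.map_sum, MvPolynomial.eval_X, MvPolynomial.eval_C,
      Sum.elim_inl, Sum.elim_inr, hcoe1, hcoe2]
    rw [hsum, hsum, hval_v' m, hval_w (k + 1)]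
  have hevalQ : evalAt ((∑ j, MvPolynomial.X (Sum.inr (i, j)) * MvPolynomial.C (v' j)) *
          (∑ j, MvPolynomial.X (Sum.inl (i, j)) * MvPolynomial.C (w j)))
      ((a ^ (m + 1) : GL (Fin n) ℂ) : Matrix (Fin n) (Fin n) ℂ)
      ((a ^ (k + 1) : GL (Fin n) ℂ) : Matrix (Fin n) (Fin n) ℂ)
      = (((k : ℂ) + 1) * μ ^ k * w i) * (μ ^ (m + 1) * w i) := by
    simp only [evalAt, _root_.map_mul, _root_.map_sum, MvPolynomial.eval_X, MvPolynomial.eval_C,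
      Sum.elim_inl, Sum.elim_inr, hcoe1, hcoe2]
    rw [hsum, hsum, hval_v' k, hval_w (m + 1)]
  have hk1 : ((k : ℂ) + 1) ≠ 0 := by
    exact_mod_cast Nat.succ_ne_zero k
  have hm1 : ((m : ℂ) + 1) ≠ 0 := by
    exact_mod_cast Nat.succ_ne_zero m
  have hQ0 : (((k : ℂ) + 1) * μ ^ k * w i) * (μ ^ (m + 1) * w i) ≠ 0 := by
    apply mul_ne_zero
    · exact mul_ne_zero (mul_ne_zero hk1 (pow_ne_zero _ hμ0)) hwi
    · exact mul_ne_zero (pow_ne_zero _ hμ0) hwi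
  refine ⟨by rw [hevalQ]; exact hQ0, ?_⟩
  rw [hevalP, hevalQ]
  have hqc : (q : ℂ) = ((m : ℂ) + 1) / ((k : ℂ) + 1) := by
    rw [Rat.cast_def]
    have hnum : q.num = (m : ℤ) + 1 := by
      have h0 : 0 ≤ q.num := le_of_lt (Rat.num_pos.mpr hq)
      omega
    have h1 : (q.num : ℂ) = (m : ℂ) + 1 := by exact_mod_cast hnum
    have h2 : (q.den : ℂ) = (k : ℂ) + 1 := by exact_mod_cast congrArg (fun x : ℕ => (x : ℂ)) hk
    rw [h1, h2]
  rw [hqc]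
  field_simp
  ring
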